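/- arXiv:1807.02781 — 7 statements merged into one kernel-verified Lean document; each statement's English description precedes it below -/
import Mathlib

section
/- Let k ≥ 1 and let A, B ∈ ℝ^k. Let I be a finite nonempty index set and for each i ∈ I let γ_i, η_i ∈ ℝ^k be vectors with ⟨A, γ_i⟩ > 0 and ⟨B, γ_i⟩ > 0 (dot products). For P ∈ ℝ^k with ⟨P, γ_i⟩ > 0 for all i, set λ(P) = max over i ∈ I of ⟨P, η_i⟩ / ⟨P, γ_i⟩, and for t ∈ [0,1] set A_t = (1−t)·A + t·B. Then for every t ∈ [0,1] one has ⟨A_t, γ_i⟩ > 0 for all i, and λ(A_t) ≤ max(λ(A), λ(B)). (Quasi-convexity of the displacement function along Euclidean segments of a simplex, Lemma 'lconvexity', first claim, in edge-length coordinates.) -/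
open Finset

/-- Quasi-convexity of the displacement function along Euclidean segments of a
simplex (Lemma `lconvexity`, first claim), in edge-length coordinates: the
displacement is the max over a finite set of candidates of the ratios
`⟨P, η i⟩ / ⟨P, γ i⟩`, and along the segment `A_t = (1-t)A + tB` it is bounded
by the max of the values at the endpoints. -/
theorem displacement_quasiconvex_on_segment
    (k : ℕ) (hk : 1 ≤ k) (A B : Fin k → ℝ)
    (I : Type*) [Fintype I] [Nonempty I]
    (γ η : I → Fin k → ℝ)
    (hA : ∀ i : I, 0 < ∑ j, A j * γ i j)
    (hB : ∀ i : I, 0 < ∑ j, B j * γ i j) :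
    ∀ t ∈ Set.Icc (0 : ℝ) 1,
      (∀ i : I, 0 < ∑ j, ((1 - t) • A + t • B) j * γ i j) ∧
      Finset.univ.sup' Finset.univ_nonempty
          (fun i : I => (∑ j, ((1 - t) • A + t • B) j * η i j) /
            (∑ j, ((1 - t) • A + t • B) j * γ i j))
        ≤ max
          (Finset.univ.sup' Finset.univ_nonempty
            (fun i : I => (∑ j, A j * η i j) / (∑ j, A j * γ i j)))
          (Finset.univ.sup' Finset.univ_nonempty
            (fun i : I => (∑ j, B j * η i j) / (∑ j, B j * γ i j))) := by
  intro t ht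
  obtain ⟨ht0, ht1⟩ := ht
  have h1t : (0:ℝ) ≤ 1 - t := by linarith
  have hsum : ∀ (v : Fin k → ℝ),
      (∑ j, ((1 - t) • A + t • B) j * v j)
        = (1 - t) * (∑ j, A j * v j) + t * (∑ j, B j * v j) := by
    intro v
    rw [Finset.mul_sum, Finset.mul_sum, ← Finset.sum_add_distrib]
    refine Finset.sum_congr rfl fun j _ => ?_
    simp [Pi.add_apply, Pi.smul_apply, smul_eq_mul]
    ring
  have hpos : ∀ i : I, 0 < ∑ j, ((1 - t) • A + t • B) j * γ i j := by
    intro i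
    rw [hsum]
    rcases eq_or_lt_of_le h1t with h | h
    · have : t = 1 := by linarith
      simp [this, hB i]
    · have := hB i
      nlinarith [hA i, hB i, mul_nonneg ht0 (hB i).le]
  refine ⟨hpos, ?_⟩
  set MA := Finset.univ.sup' Finset.univ_nonempty
      (fun i : I => (∑ j, A j * η i j) / (∑ j, A j * γ i j)) with hMA
  set MB := Finset.univ.sup' Finset.univ_nonempty
      (fun i : I => (∑ j, B j * η i j) / (∑ j, B j * γ i j)) with hMB
  set M := max MA MB with hM
  apply Finset.sup'_le
  intro i _
  rw [div_le_iff₀ (hpos i)]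
  have hAi : (∑ j, A j * η i j) ≤ MA * (∑ j, A j * γ i j) := by
    rw [← div_le_iff₀ (hA i), hMA]
    exact Finset.le_sup' (fun i : I => (∑ j, A j * η i j) / (∑ j, A j * γ i j)) (Finset.mem_univ i)
  have hBi : (∑ j, B j * η i j) ≤ MB * (∑ j, B j * γ i j) := by
    rw [← div_le_iff₀ (hB i), hMB]
    exact Finset.le_sup' (fun i : I => (∑ j, B j * η i j) / (∑ j, B j * γ i j)) (Finset.mem_univ i)
  have hMAle : MA ≤ M := le_max_left _ _
  have hMBle : MB ≤ M := le_max_right _ _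
  rw [hsum, hsum]
  have h1 : (1 - t) * (∑ j, A j * η i j) ≤ (1 - t) * (M * (∑ j, A j * γ i j)) := by
    apply mul_le_mul_of_nonneg_left _ h1t
    calc (∑ j, A j * η i j) ≤ MA * (∑ j, A j * γ i j) := hAi
      _ ≤ M * (∑ j, A j * γ i j) := mul_le_mul_of_nonneg_right hMAle (hA i).le
  have h2 : t * (∑ j, B j * η i j) ≤ t * (M * (∑ j, B j * γ i j)) := by
    apply mul_le_mul_of_nonneg_left _ ht0
    calc (∑ j, B j * η i j) ≤ MB * (∑ j, B j * γ i j) := hBi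
      _ ≤ M * (∑ j, B j * γ i j) := mul_le_mul_of_nonneg_right hMBle (hB i).le
  nlinarith [h1, h2]
end

section
/- Let k ≥ 1 and let A, B ∈ ℝ^k with a finite nonempty index set I and vectors γ_i, η_i ∈ ℝ^k satisfying ⟨A, γ_i⟩ > 0 and ⟨B, γ_i⟩ > 0 for all i ∈ I. Set λ(P) = max over i ∈ I of ⟨P, η_i⟩ / ⟨P, γ_i⟩ and A_t = (1−t)·A + t·B. If λ(A) > λ(B), then there exists ε ∈ (0, 1] such that the function t ↦ λ(A_t) is strictly decreasing on [0, ε]. (Lemma 'lconvexity', second claim: the displacement is strictly monotone near A when λ(A) > λ(B).) -/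
open Finset

/-- Lemma `lconvexity`, second claim: if the displacement at `A` is strictly
bigger than at `B`, then along the segment `A_t = (1−t)A + tB` the displacement
`λ(A_t) = max_i ⟨A_t,η i⟩/⟨A_t,γ i⟩` is strictly decreasing near `A`. -/
theorem displacement_strictly_monotone_near_A
    (k : ℕ) (hk : 1 ≤ k) (A B : Fin k → ℝ)
    (I : Type*) [Fintype I] [Nonempty I]
    (γ η : I → Fin k → ℝ)
    (hA : ∀ i : I, 0 < ∑ j, A j * γ i j)
    (hB : ∀ i : I, 0 < ∑ j, B j * γ i j)
    (hlt : Finset.univ.sup' Finset.univ_nonempty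
        (fun i : I => (∑ j, B j * η i j) / (∑ j, B j * γ i j))
      < Finset.univ.sup' Finset.univ_nonempty
        (fun i : I => (∑ j, A j * η i j) / (∑ j, A j * γ i j))) :
    ∃ ε : ℝ, ε ∈ Set.Ioc (0 : ℝ) 1 ∧
      StrictAntiOn
        (fun t : ℝ => Finset.univ.sup' Finset.univ_nonempty
          (fun i : I => (∑ j, ((1 - t) • A + t • B) j * η i j) /
            (∑ j, ((1 - t) • A + t • B) j * γ i j)))
        (Set.Icc (0 : ℝ) ε) := by
  classical
  set aA : I → ℝ := fun i => ∑ j, A j * η i j with haA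
  set aB : I → ℝ := fun i => ∑ j, B j * η i j with haB
  set gA : I → ℝ := fun i => ∑ j, A j * γ i j with hgA
  set gB : I → ℝ := fun i => ∑ j, B j * γ i j with hgB
  set f : I → ℝ → ℝ :=
    fun i t => ((1 - t) * aA i + t * aB i) / ((1 - t) * gA i + t * gB i) with hf
  have key : ∀ (v : I → Fin k → ℝ) (i : I) (t : ℝ),
      (∑ j, ((1 - t) • A + t • B) j * v i j)
        = (1 - t) * (∑ j, A j * v i j) + t * (∑ j, B j * v i j) := by
    intro v i t
    rw [Finset.mul_sum, Finset.mul_sum, ← Finset.sum_add_distrib]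
    refine Finset.sum_congr rfl fun j _ => ?_
    simp only [Pi.add_apply, Pi.smul_apply, smul_eq_mul]
    ring
  have hgoalfun : (fun t : ℝ => Finset.univ.sup' Finset.univ_nonempty
      (fun i : I => (∑ j, ((1 - t) • A + t • B) j * η i j) /
        (∑ j, ((1 - t) • A + t • B) j * γ i j)))
      = fun t => Finset.univ.sup' Finset.univ_nonempty (fun i => f i t) := by
    funext t
    refine Finset.sup'_congr _ rfl fun i _ => ?_
    rw [key η, key γ]
  rw [hgoalfun]
  have hf0 : ∀ i, f i 0 = aA i / gA i := by intro i; simp [hf]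
  have hf1 : ∀ i, f i 1 = aB i / gB i := by intro i; simp [hf]
  have hlt' : Finset.univ.sup' Finset.univ_nonempty (fun i => f i 1)
      < Finset.univ.sup' Finset.univ_nonempty (fun i => f i 0) := by
    simpa [hf0, hf1] using hlt
  set M : ℝ := Finset.univ.sup' Finset.univ_nonempty (fun i => f i 0) with hM
  have hgA' : ∀ i, 0 < gA i := hA
  have hgB' : ∀ i, 0 < gB i := hB
  have hD : ∀ i, ∀ t : ℝ, 0 ≤ t → t ≤ 1 → 0 < (1 - t) * gA i + t * gB i := by
    intro i t ht0 ht1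
    rcases lt_or_ge t 1 with h | h
    · nlinarith [mul_pos (sub_pos.mpr h) (hgA' i), mul_nonneg ht0 (hgB' i).le]
    · have ht : t = 1 := le_antisymm ht1 h
      subst ht
      nlinarith [hgB' i]
  have hdiff : ∀ i, ∀ s t : ℝ, 0 ≤ s → s ≤ 1 → 0 ≤ t → t ≤ 1 →
      f i t - f i s = (t - s) * (aB i * gA i - aA i * gB i)
        / (((1 - t) * gA i + t * gB i) * ((1 - s) * gA i + s * gB i)) := by
    intro i s t hs0 hs1 ht0 ht1
    have h1 := (hD i s hs0 hs1).ne'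
    have h2 := (hD i t ht0 ht1).ne'
    rw [hf]
    beta_reduce
    rw [div_sub_div _ _ h2 h1]
    ring
  have hle : ∀ i, f i 0 ≤ M := by
    intro i; rw [hM]; exact Finset.le_sup' (fun i => f i 0) (Finset.mem_univ i)
  have hcneg : ∀ i, f i 0 = M → aB i * gA i - aA i * gB i < 0 := by
    intro i hi
    have h1 : f i 1 ≤ Finset.univ.sup' Finset.univ_nonempty (fun i => f i 1) :=
      Finset.le_sup' (fun i => f i 1) (Finset.mem_univ i)
    have h2 : f i 1 - f i 0 < 0 := by linarith
    rw [hdiff i 0 1 le_rfl zero_le_one zero_le_one le_rfl] at h2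
    have hd : 0 < ((1 - 1) * gA i + 1 * gB i) * ((1 - 0) * gA i + 0 * gB i) :=
      mul_pos (hD i 1 zero_le_one le_rfl) (hD i 0 le_rfl zero_le_one)
    rcases div_neg_iff.mp h2 with ⟨_, h⟩ | ⟨h, _⟩
    · linarith
    · nlinarith
  have hdec : ∀ i, aB i * gA i - aA i * gB i < 0 → ∀ s t : ℝ, 0 ≤ s → s < t → t ≤ 1 →
      f i t < f i s := by
    intro i hc s t hs0 hst ht1
    have h := hdiff i s t hs0 (by linarith) (by linarith) ht1
    have hd : 0 < ((1 - t) * gA i + t * gB i) * ((1 - s) * gA i + s * gB i) :=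
      mul_pos (hD i t (by linarith) ht1) (hD i s hs0 (by linarith))
    have hnum : (t - s) * (aB i * gA i - aA i * gB i) < 0 :=
      mul_neg_of_pos_of_neg (by linarith) hc
    have : f i t - f i s < 0 := by rw [h]; exact div_neg_of_neg_of_pos hnum hd
    linarith
  obtain ⟨j₀, -, hj₀⟩ := Finset.exists_mem_eq_sup' (Finset.univ_nonempty)
    (fun i : I => f i 0)
  have hcj₀ : aB j₀ * gA j₀ - aA j₀ * gB j₀ < 0 := hcneg j₀ hj₀.symm
  have hcont : ∀ i, ContinuousAt (f i) 0 := by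
    intro i
    rw [hf]
    exact ContinuousAt.div (by fun_prop) (by fun_prop)
      (by simpa using (hD i 0 le_rfl zero_le_one).ne')
  have hev : ∀ᶠ t in nhds (0:ℝ), ∀ i, f i 0 < M → f i t < f j₀ t := by
    rw [Filter.eventually_all]
    intro i
    by_cases hi : f i 0 < M
    · have hc : ContinuousAt (fun t => f j₀ t - f i t) 0 := (hcont j₀).sub (hcont i)
      have h0 : (0:ℝ) < f j₀ 0 - f i 0 := by
        have : f i 0 < f j₀ 0 := by rw [← hj₀]; exact hi
        linarith
      have := hc.eventually (eventually_gt_nhds h0)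
      filter_upwards [this] with t ht _
      linarith
    · filter_upwards with t h
      exact absurd h hi
  rw [Metric.eventually_nhds_iff] at hev
  obtain ⟨δ, hδ, hδP⟩ := hev
  refine ⟨min (δ/2) 1, ⟨lt_min (by linarith) one_pos, min_le_right _ _⟩, ?_⟩
  intro s hs t ht hst
  have hεδ : min (δ/2) 1 ≤ δ/2 := min_le_left _ _
  have hε1 : min (δ/2) 1 ≤ 1 := min_le_right _ _
  have hs1 : s ≤ 1 := le_trans hs.2 hε1
  have ht1 : t ≤ 1 := le_trans ht.2 hε1
  have hPs : ∀ i, f i 0 < M → f i s < f j₀ s := by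
    apply hδP
    rw [Real.dist_eq, sub_zero, abs_of_nonneg hs.1]
    have := hs.2; linarith
  have hPt : ∀ i, f i 0 < M → f i t < f j₀ t := by
    apply hδP
    rw [Real.dist_eq, sub_zero, abs_of_nonneg ht.1]
    have := ht.2; linarith
  simp only
  rw [Finset.sup'_lt_iff]
  intro i _
  rcases (hle i).lt_or_eq with h | h
  · calc f i t < f j₀ t := hPt i h
      _ < f j₀ s := hdec j₀ hcj₀ s t hs.1 hst ht1
      _ ≤ Finset.univ.sup' Finset.univ_nonempty (fun i => f i s) :=
          Finset.le_sup' (fun i => f i s) (Finset.mem_univ j₀)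
  · exact lt_of_lt_of_le (hdec i (hcneg i h) s t hs.1 hst ht1)
      (Finset.le_sup' (fun i => f i s) (Finset.mem_univ i))
end

section
/- Let k ≥ 1 and let A, B, γ, η ∈ ℝ^k with ⟨A, γ⟩ > 0, ⟨B, γ⟩ > 0, and ⟨A, η⟩ ≥ 0. Set C = max( ⟨A, γ⟩/⟨B, γ⟩ , ⟨B, γ⟩/⟨A, γ⟩ ), A_t = (1−t)·A + t·B, and F(t) = ⟨A_t, η⟩/⟨A_t, γ⟩. Suppose that ⟨B, η⟩/⟨B, γ⟩ ≥ ⟨A, η⟩/⟨A, γ⟩. Then for every t ∈ [0,1] the derivative of F satisfies 0 ≤ F'(t) ≤ C · ⟨B, η⟩/⟨B, γ⟩. (Lemma 'derivative', first claim: bound on the steepness of a candidate's stretching factor along a segment.) -/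
open Finset

set_option maxHeartbeats 1000000 in
/-- Lemma `derivative`, first claim: if the stretching factor of the candidate
at `B` is at least that at `A`, then along the segment `A_t = (1−t)A + tB` the
derivative of `F(t) = ⟨A_t,η⟩/⟨A_t,γ⟩` satisfies
`0 ≤ F'(t) ≤ C·⟨B,η⟩/⟨B,γ⟩`, where
`C = max(⟨A,γ⟩/⟨B,γ⟩, ⟨B,γ⟩/⟨A,γ⟩)`. -/
theorem stretching_factor_deriv_bound
    (k : ℕ) (hk : 1 ≤ k) (A B γ η : Fin k → ℝ)
    (hA : 0 < ∑ j, A j * γ j) (hB : 0 < ∑ j, B j * γ j)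
    (hη : 0 ≤ ∑ j, A j * η j)
    (hmono : (∑ j, A j * η j) / (∑ j, A j * γ j) ≤
      (∑ j, B j * η j) / (∑ j, B j * γ j)) :
    ∀ t ∈ Set.Icc (0 : ℝ) 1,
      0 ≤ deriv
          (fun s : ℝ => (∑ j, ((1 - s) • A + s • B) j * η j) /
            (∑ j, ((1 - s) • A + s • B) j * γ j)) t ∧
      deriv
          (fun s : ℝ => (∑ j, ((1 - s) • A + s • B) j * η j) /
            (∑ j, ((1 - s) • A + s • B) j * γ j)) t ≤
        max ((∑ j, A j * γ j) / (∑ j, B j * γ j))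
            ((∑ j, B j * γ j) / (∑ j, A j * γ j)) *
          ((∑ j, B j * η j) / (∑ j, B j * γ j)) := by

  intro t ht
  obtain ⟨ht0, ht1⟩ := ht
  set a := ∑ j, A j * γ j with ha
  set b := ∑ j, B j * γ j with hbdef
  set p := ∑ j, A j * η j with hpdef
  set q := ∑ j, B j * η j with hqdef
  clear_value a b p q
  have hfun : (fun s : ℝ => (∑ j, ((1 - s) • A + s • B) j * η j) /
            (∑ j, ((1 - s) • A + s • B) j * γ j))
      = fun s : ℝ => ((1 - s) * p + s * q) / ((1 - s) * a + s * b) := by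
    funext s
    rw [ha, hbdef, hpdef, hqdef]
    simp only [Pi.add_apply, Pi.smul_apply, smul_eq_mul, add_mul,
      Finset.sum_add_distrib, Finset.mul_sum, mul_assoc]
  rw [hfun]
  set D := (1 - t) * a + t * b with hDdef
  clear_value D
  have hD : 0 < D := by
    have hm : min a b ≤ D := by
      rcases le_total a b with h | h
      · rw [min_eq_left h]; nlinarith
      · rw [min_eq_right h]; nlinarith
    exact lt_of_lt_of_le (lt_min hA hB) hm
  have h1 : HasDerivAt (fun s : ℝ => (1 - s) * p + s * q) ((-1) * p + 1 * q) t := by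
    exact (((hasDerivAt_id t).const_sub 1).mul_const p).add ((hasDerivAt_id t).mul_const q)
  have h2 : HasDerivAt (fun s : ℝ => (1 - s) * a + s * b) ((-1) * a + 1 * b) t := by
    exact (((hasDerivAt_id t).const_sub 1).mul_const a).add ((hasDerivAt_id t).mul_const b)
  have hdiv := (h1.div h2 (hDdef ▸ hD.ne')).deriv
  rw [show (fun s : ℝ => ((1 - s) * p + s * q) / ((1 - s) * a + s * b)) = ((fun s : ℝ => (1 - s) * p + s * q) / fun s => (1 - s) * a + s * b) from rfl, hdiv]
  have hkey : (((-1) * p + 1 * q) * ((1 - t) * a + t * b) -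
      ((1 - t) * p + t * q) * ((-1) * a + 1 * b)) / ((1 - t) * a + t * b) ^ 2
      = (a * q - b * p) / D ^ 2 := by
    rw [hDdef]; ring
  rw [hkey]
  have hmono' : p * b ≤ q * a := (div_le_div_iff₀ hA hB).mp hmono
  have hq : 0 ≤ q := by
    have h := (div_nonneg hη hA.le).trans hmono
    have := (le_div_iff₀ hB).mp h
    linarith
  constructor
  · apply div_nonneg _ (sq_nonneg _)
    nlinarith
  · rcases le_total a b with h | h
    · have hC : max (a / b) (b / a) = b / a := by
        rw [max_eq_right]
        rw [div_le_div_iff₀ hB hA]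
        nlinarith
      rw [hC]
      have hDa : a ≤ D := by rw [hDdef]; nlinarith
      rw [div_mul_div_comm]
      rw [div_le_div_iff₀ (by positivity) (by positivity)]
      have e1 : (0:ℝ) ≤ b * (q * (D ^ 2 - a ^ 2)) :=
        mul_nonneg hB.le (mul_nonneg hq (by nlinarith))
      have e2 : (0:ℝ) ≤ a * b * (p * b) :=
        mul_nonneg (mul_nonneg hA.le hB.le) (mul_nonneg hη hB.le)
      nlinarith [e1, e2]
    · have hC : max (a / b) (b / a) = a / b := by
        rw [max_eq_left]
        rw [div_le_div_iff₀ hA hB]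
        nlinarith
      rw [hC]
      have hDb : b ≤ D := by rw [hDdef]; nlinarith
      rw [div_mul_div_comm]
      rw [div_le_div_iff₀ (by positivity) (by positivity)]
      have e1 : (0:ℝ) ≤ a * (q * (D ^ 2 - b ^ 2)) :=
        mul_nonneg hA.le (mul_nonneg hq (by nlinarith))
      have e2 : (0:ℝ) ≤ b ^ 2 * (b * p) :=
        mul_nonneg (by positivity) (mul_nonneg hB.le hη)
      nlinarith [e1, e2]
end

section
/- Let k ≥ 1 and let A, B, γ, η ∈ ℝ^k with A ≠ B, ⟨A, γ⟩ > 0, ⟨B, γ⟩ > 0, and ⟨A, η⟩ ≥ 0. Set C = max( ⟨A, γ⟩/⟨B, γ⟩ , ⟨B, γ⟩/⟨A, γ⟩ ). Suppose that ⟨B, η⟩/⟨B, γ⟩ ≥ ⟨A, η⟩/⟨A, γ⟩. Then for every t ∈ [0,1], with P = (1−t)·A + t·B, one has ⟨P, η⟩/⟨P, γ⟩ ≥ ⟨B, η⟩/⟨B, γ⟩ − C · (⟨B, η⟩/⟨B, γ⟩) · ‖P − B‖ / ‖A − B‖, where ‖·‖ is the standard Euclidean norm on ℝ^k. (Lemma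 'derivative', second claim: a lower bound for the stretching factor of a candidate at points of a Euclidean segment in terms of its value at an endpoint.) -/
open Finset

lemma stretch_key (a b u v t : ℝ) (ha : 0 < a) (hb : 0 < b) (hu : 0 ≤ u)
    (hmono : u / a ≤ v / b) (ht0 : 0 ≤ t) (ht1 : t ≤ 1) :
    ((1 - t) * u + t * v) / ((1 - t) * a + t * b) ≥
      v / b - max (a / b) (b / a) * (v / b) * (1 - t) := by
  have hv : 0 ≤ v := by
    have h1 : 0 ≤ u / a := div_nonneg hu ha.le
    have h2 : 0 ≤ v / b := le_trans h1 hmono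
    have := mul_nonneg h2 hb.le
    rwa [div_mul_cancel₀] at this
    exact hb.ne'
  have hD : 0 < (1 - t) * a + t * b := by
    rcases lt_or_ge t 1 with h | h
    · have := mul_pos (by linarith : (0:ℝ) < 1 - t) ha
      nlinarith [mul_nonneg ht0 hb.le]
    · have ht : t = 1 := le_antisymm ht1 h
      simp [ht]; linarith
  have hub : u * b ≤ v * a := by
    rw [div_le_div_iff₀ ha hb] at hmono; linarith
  set C := max (a / b) (b / a) with hCdef
  have hC : a ≤ C * ((1 - t) * a + t * b) := by
    rcases le_total a b with h | h
    · have hC1 : 1 ≤ C := le_trans (by rw [le_div_iff₀ ha]; linarith) (le_max_right _ _)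
      have hDa : a ≤ (1 - t) * a + t * b := by nlinarith
      nlinarith
    · have hC1 : a / b ≤ C := le_max_left _ _
      have hDb : b ≤ (1 - t) * a + t * b := by nlinarith
      have : a / b * b ≤ C * ((1 - t) * a + t * b) := by
        apply mul_le_mul hC1 hDb hb.le (le_trans (by positivity) hC1)
      rwa [div_mul_cancel₀ _ hb.ne'] at this
  rw [ge_iff_le, show v / b - C * (v / b) * (1 - t) = (v - C * v * (1 - t)) / b by ring,
    div_le_div_iff₀ hb hD]
  have key : v * ((1 - t) * a + t * b) - ((1 - t) * u + t * v) * b ≤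
      C * v * (1 - t) * ((1 - t) * a + t * b) := by
    have h1 : (0:ℝ) ≤ 1 - t := by linarith
    have h2 : v * ((1 - t) * a + t * b) - ((1 - t) * u + t * v) * b
        = (1 - t) * (v * a - u * b) := by ring
    have h3 : (1 - t) * (v * a - u * b) ≤ (1 - t) * (v * a) := by
      apply mul_le_mul_of_nonneg_left _ h1
      nlinarith [mul_nonneg hu hb.le]
    have h4 : (1 - t) * (v * a) ≤ (1 - t) * (v * (C * ((1 - t) * a + t * b))) := by
      apply mul_le_mul_of_nonneg_left _ h1
      exact mul_le_mul_of_nonneg_left hC hv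
    calc v * ((1 - t) * a + t * b) - ((1 - t) * u + t * v) * b
        = (1 - t) * (v * a - u * b) := h2
      _ ≤ (1 - t) * (v * a) := h3
      _ ≤ (1 - t) * (v * (C * ((1 - t) * a + t * b))) := h4
      _ = C * v * (1 - t) * ((1 - t) * a + t * b) := by ring
  nlinarith [key]

/-- Lemma `derivative`, second claim: lower bound for the stretching factor of
a candidate at points `P = (1−t)A + tB` of a Euclidean segment, in terms of its
value at the endpoint `B`:
`⟨P,η⟩/⟨P,γ⟩ ≥ ⟨B,η⟩/⟨B,γ⟩ − C·(⟨B,η⟩/⟨B,γ⟩)·‖P−B‖/‖A−B‖`,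
with `C = max(⟨A,γ⟩/⟨B,γ⟩, ⟨B,γ⟩/⟨A,γ⟩)` and `‖·‖` the Euclidean norm. -/
theorem stretching_factor_lower_bound_on_segment
    (k : ℕ) (hk : 1 ≤ k) (A B γ η : EuclideanSpace ℝ (Fin k))
    (hAB : A ≠ B)
    (hA : 0 < ∑ j, A j * γ j) (hB : 0 < ∑ j, B j * γ j)
    (hη : 0 ≤ ∑ j, A j * η j)
    (hmono : (∑ j, A j * η j) / (∑ j, A j * γ j) ≤
      (∑ j, B j * η j) / (∑ j, B j * γ j)) :
    ∀ t ∈ Set.Icc (0 : ℝ) 1,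
      (∑ j, ((1 - t) • A + t • B) j * η j) /
          (∑ j, ((1 - t) • A + t • B) j * γ j) ≥
        (∑ j, B j * η j) / (∑ j, B j * γ j) -
          max ((∑ j, A j * γ j) / (∑ j, B j * γ j))
              ((∑ j, B j * γ j) / (∑ j, A j * γ j)) *
            ((∑ j, B j * η j) / (∑ j, B j * γ j)) *
            (‖((1 - t) • A + t • B) - B‖ / ‖A - B‖) := by
  intro t ht
  obtain ⟨ht0, ht1⟩ := ht
  have hsum : ∀ x : EuclideanSpace ℝ (Fin k),
      ∑ j, ((1 - t) • A + t • B) j * x j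
        = (1 - t) * ∑ j, A j * x j + t * ∑ j, B j * x j := by
    intro x
    rw [Finset.mul_sum, Finset.mul_sum, ← Finset.sum_add_distrib]
    apply Finset.sum_congr rfl
    intro j _
    simp [PiLp.add_apply, PiLp.smul_apply, smul_eq_mul]
    ring
  have hPB : ((1 - t) • A + t • B) - B = (1 - t) • (A - B) := by module
  have hnorm : ‖((1 - t) • A + t • B) - B‖ / ‖A - B‖ = 1 - t := by
    rw [hPB, norm_smul, Real.norm_eq_abs, abs_of_nonneg (by linarith : (0:ℝ) ≤ 1 - t),
      mul_div_assoc, div_self (norm_ne_zero_iff.mpr (sub_ne_zero.mpr hAB)), mul_one]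
  rw [hnorm, hsum η, hsum γ]
  exact stretch_key _ _ _ _ t hA hB hη hmono ht0 ht1
end

section
/- Let S be a nonempty type, let Λ : S → S → ℝ satisfy Λ(x,y) > 0 for all x, y and the multiplicative triangle inequality Λ(x,z) ≤ Λ(x,y)·Λ(y,z) for all x, y, z, and let φ : S → S satisfy Λ(φ x, φ y) = Λ(x, y) for all x, y. Let X ∈ S, let k > 0 and A > 0 be real numbers, and let N ∈ ℕ. If A·kⁿ ≤ Λ(X, φⁿ X) for every n ≥ N (where φⁿ is the n-fold iterate of φ), then k ≤ Λ(Y, φ Y) for every Y ∈ S; in particular k ≤ λ(φ) := inf over Y of Λ(Y, φ Y). (Lemma 'triangin'.) -/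
/-- Lemma `triangin`: if `Λ` is a positive stretching factor satisfying the
multiplicative triangle inequality, `φ` acts by `Λ`-isometries, and
`A·kⁿ ≤ Λ(X, φⁿX)` for all large `n`, then `k ≤ Λ(Y, φY)` for every `Y`; in
particular `k ≤ λ(φ) = inf_Y Λ(Y, φY)`. -/
theorem triangin
    (S : Type*) [Nonempty S] (Λ : S → S → ℝ)
    (hpos : ∀ x y : S, 0 < Λ x y)
    (htri : ∀ x y z : S, Λ x z ≤ Λ x y * Λ y z)
    (φ : S → S)
    (hiso : ∀ x y : S, Λ (φ x) (φ y) = Λ x y)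
    (X : S) (k A : ℝ) (hk : 0 < k) (hA : 0 < A) (N : ℕ)
    (hgrowth : ∀ n : ℕ, N ≤ n → A * k ^ n ≤ Λ X (φ^[n] X)) :
    (∀ Y : S, k ≤ Λ Y (φ Y)) ∧ k ≤ ⨅ Y : S, Λ Y (φ Y) := by
  have main : ∀ Y : S, k ≤ Λ Y (φ Y) := by
    intro Y
    set lam := Λ Y (φ Y) with hlam
    have hlampos : 0 < lam := hpos _ _
    -- key: Λ Y (φ^[n] X) ≤ lam ^ n * Λ Y X
    have key : ∀ n : ℕ, Λ Y (φ^[n] X) ≤ lam ^ n * Λ Y X := by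
      intro n
      induction n with
      | zero => simp
      | succ n ih =>
        have h1 : Λ Y (φ^[n+1] X) ≤ lam * Λ Y (φ^[n] X) := by
          have h2 := htri Y (φ Y) (φ^[n+1] X)
          have h3 : Λ (φ Y) (φ^[n+1] X) = Λ Y (φ^[n] X) := by
            rw [Function.iterate_succ_apply']
            exact hiso Y (φ^[n] X)
          rw [h3] at h2
          exact h2
        calc Λ Y (φ^[n+1] X) ≤ lam * Λ Y (φ^[n] X) := h1
          _ ≤ lam * (lam ^ n * Λ Y X) := by
              exact mul_le_mul_of_nonneg_left ih hlampos.le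
          _ = lam ^ (n+1) * Λ Y X := by ring
    set C := Λ X Y * Λ Y X with hC
    have hCpos : 0 < C := mul_pos (hpos _ _) (hpos _ _)
    have bound : ∀ n : ℕ, N ≤ n → A * k ^ n ≤ C * lam ^ n := by
      intro n hn
      calc A * k ^ n ≤ Λ X (φ^[n] X) := hgrowth n hn
        _ ≤ Λ X Y * Λ Y (φ^[n] X) := htri _ _ _
        _ ≤ Λ X Y * (lam ^ n * Λ Y X) :=
            mul_le_mul_of_nonneg_left (key n) (hpos X Y).le
        _ = C * lam ^ n := by ring
    by_contra hlt
    push_neg at hlt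
    have hr : 1 < k / lam := (one_lt_div hlampos).mpr hlt
    have htend : Filter.Tendsto (fun n : ℕ => (k / lam) ^ n)
        Filter.atTop Filter.atTop := tendsto_pow_atTop_atTop_of_one_lt hr
    obtain ⟨n, hn⟩ := ((htend.eventually_ge_atTop (C / A + 1)).and
      (Filter.eventually_ge_atTop N)).exists
    have hb := bound n hn.2
    have h4 : (k / lam) ^ n ≤ C / A := by
      rw [div_pow, div_le_div_iff₀ (pow_pos hlampos n) hA]
      nlinarith [hb]
    linarith [hn.1]
  refine ⟨main, le_ciInf main⟩
end

section
/- Let S be a nonempty type, let Λ : S → S → ℝ satisfy Λ(x,y) > 0 for all x, y and the multiplicative triangle inequality Λ(x,z) ≤ Λ(x,y)·Λ(y,z) for all x, y, z, and let φ : S → S satisfy Λ(φ x, φ y) = Λ(x, y) for all x, y. Let X ∈ S and suppose that Λ(X, φᵏ X) = (Λ(X, φ X))ᵏ for every k ≥ 1 (where φᵏ is the k-fold iterate of φ). Then Λ(X, φ X) ≤ Λ(Y, φ Y) for every Y ∈ S; that is, X is a global minimizer of the displacement function Y ↦ Λ(Y, φ Y). (Step 'TT(φ) ⊆ Min(φ)'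 in the proof of Theorem 'Theoremtt': a point supporting a partial train track minimizes the displacement.) -/
/-- Step `TT(φ) ⊆ Min(φ)` in the proof of Theorem `Theoremtt`: if `Λ` is a
positive stretching factor satisfying the multiplicative triangle inequality,
`φ` acts by `Λ`-isometries, and `X` satisfies
`Λ(X, φᵏX) = Λ(X, φX)ᵏ` for all `k ≥ 1` (as does any point supporting a
partial train track), then `X` globally minimizes the displacement
`Y ↦ Λ(Y, φY)`. -/
theorem train_track_point_minimizes_displacement
    (S : Type*) [Nonempty S] (Λ : S → S → ℝ)
    (hpos : ∀ x y : S, 0 < Λ x y)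
    (htri : ∀ x y z : S, Λ x z ≤ Λ x y * Λ y z)
    (φ : S → S)
    (hiso : ∀ x y : S, Λ (φ x) (φ y) = Λ x y)
    (X : S)
    (htt : ∀ k : ℕ, 1 ≤ k → Λ X (φ^[k] X) = (Λ X (φ X)) ^ k) :
    ∀ Y : S, Λ X (φ X) ≤ Λ Y (φ Y) := by
  intro Y
  -- iterated isometry
  have hiso' : ∀ (k : ℕ) (x y : S), Λ (φ^[k] x) (φ^[k] y) = Λ x y := by
    intro k
    induction k with
    | zero => intro x y; simp
    | succ n ih =>
      intro x y
      simp only [Function.iterate_succ_apply]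
      exact (ih (φ x) (φ y)).trans (hiso x y)
  -- Λ(Y, φ^k Y) ≤ Λ(Y, φY)^k
  have hYk : ∀ k : ℕ, Λ Y (φ^[k] Y) ≤ (Λ Y (φ Y)) ^ k ∨ k = 0 := by
    intro k
    induction k with
    | zero => right; rfl
    | succ n ih =>
      left
      rcases ih with h | h
      · calc Λ Y (φ^[n+1] Y) ≤ Λ Y (φ^[n] Y) * Λ (φ^[n] Y) (φ^[n+1] Y) :=
              htri _ _ _
          _ = Λ Y (φ^[n] Y) * Λ Y (φ Y) := by
              rw [show φ^[n+1] Y = φ^[n] (φ Y) from Function.iterate_succ_apply φ n Y,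
                hiso' n Y (φ Y)]
          _ ≤ (Λ Y (φ Y)) ^ n * Λ Y (φ Y) :=
              mul_le_mul_of_nonneg_right h (hpos _ _).le
          _ = (Λ Y (φ Y)) ^ (n + 1) := (pow_succ _ _).symm
      · subst h; simp [pow_one]
  -- key inequality: a^k ≤ C * b^k
  set a := Λ X (φ X) with ha
  set b := Λ Y (φ Y) with hb
  set C := Λ X Y * Λ Y X with hC
  have hCpos : 0 < C := mul_pos (hpos _ _) (hpos _ _)
  have key : ∀ k : ℕ, 1 ≤ k → a ^ k ≤ C * b ^ k := by
    intro k hk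
    have h1 : Λ X (φ^[k] X) ≤ Λ X Y * (Λ Y (φ^[k] Y) * Λ (φ^[k] Y) (φ^[k] X)) :=
      le_trans (htri X Y (φ^[k] X))
        (mul_le_mul_of_nonneg_left (htri Y (φ^[k] Y) (φ^[k] X)) (hpos _ _).le)
    rw [hiso' k Y X] at h1
    have h2 : Λ Y (φ^[k] Y) ≤ b ^ k := by
      rcases hYk k with h | h
      · exact h
      · omega
    calc a ^ k = Λ X (φ^[k] X) := (htt k hk).symm
      _ ≤ Λ X Y * (Λ Y (φ^[k] Y) * Λ Y X) := h1
      _ ≤ Λ X Y * (b ^ k * Λ Y X) := by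
          exact mul_le_mul_of_nonneg_left
            (mul_le_mul_of_nonneg_right h2 (hpos _ _).le) (hpos _ _).le
      _ = C * b ^ k := by ring
  -- conclude a ≤ b
  by_contra h
  push_neg at h
  have hbpos : 0 < b := hpos _ _
  have hab : 1 < a / b := (one_lt_div hbpos).mpr h
  obtain ⟨m, hm⟩ := pow_unbounded_of_one_lt C hab
  set n := m + 1 with hndef
  have hn : C < (a / b) ^ n := lt_of_lt_of_le hm
    (pow_le_pow_right₀ hab.le (Nat.le_succ m))
  have hn' : C * b ^ n < a ^ n := by
    have := mul_lt_mul_of_pos_right hn (pow_pos hbpos n)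
    rwa [div_pow, div_mul_cancel₀] at this
    exact (pow_pos hbpos n).ne'
  exact absurd (key n (Nat.le_add_left 1 m)) (not_le.mpr hn')
end

section
/- Let S be a nonempty type, let Λ : S → S → ℝ satisfy Λ(x,y) > 0 for all x, y and the multiplicative triangle inequality Λ(x,z) ≤ Λ(x,y)·Λ(y,z) for all x, y, z, and let φ : S → S satisfy Λ(φ x, φ y) = Λ(x, y) for all x, y. Let X ∈ S satisfy both: (i) Λ(X, φᵏ X) = (Λ(X, φ X))ᵏ for every k ≥ 1, and (ii) Λ(X, φ X) ≤ Λ(Y, φ Y) for every Y ∈ S. Then for every n ≥ 1: Λ(X, (φⁿ) X) = (Λ(X, φ X))ⁿ and (Λ(X, φ X))ⁿ ≤ Λ(Y, φⁿ Y) for every Y ∈ S; consequently the minimal displacement of φⁿ equals the n-th power of the minimal displacement of φ, λ(φⁿ) = λ(φ)ⁿ, and it is realized at X. (Corollary 'corollaryphin', via the existence of partial train tracks.) -/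
private lemma le_of_pow_le_const_mul_pow {a b C : ℝ} (ha : 0 < a) (hb : 0 < b)
    (h : ∀ m : ℕ, 1 ≤ m → a ^ m ≤ C * b ^ m) : a ≤ b := by
  by_contra hab
  push_neg at hab
  have hr : 1 < a / b := (one_lt_div hb).2 hab
  obtain ⟨m, hm⟩ := pow_unbounded_of_one_lt C hr
  have hm' : C < (a / b) ^ (m + 1) :=
    lt_of_lt_of_le hm (pow_le_pow_right₀ hr.le (Nat.le_succ m))
  have h2 := h (m + 1) (Nat.le_add_left 1 m)
  rw [div_pow, lt_div_iff₀ (pow_pos hb _)] at hm'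
  linarith

private lemma iter_chain {S : Type*} (Λ : S → S → ℝ)
    (hpos : ∀ x y : S, 0 < Λ x y)
    (htri : ∀ x y z : S, Λ x z ≤ Λ x y * Λ y z)
    (g : S → S) (hiso : ∀ x y : S, Λ (g x) (g y) = Λ x y) :
    ∀ m : ℕ, 1 ≤ m → ∀ Y : S, Λ Y (g^[m] Y) ≤ (Λ Y (g Y)) ^ m := by
  intro m
  induction m with
  | zero => omega
  | succ k ih =>
    intro _ Y
    rcases Nat.eq_zero_or_pos k with hk | hk
    · subst hk; simp
    · calc Λ Y (g^[k+1] Y) ≤ Λ Y (g Y) * Λ (g Y) (g^[k+1] Y) := htri _ _ _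
        _ = Λ Y (g Y) * Λ Y (g^[k] Y) := by
            rw [Function.iterate_succ_apply,
              show g^[k] (g Y) = g (g^[k] Y) from by
                rw [← Function.iterate_succ_apply, Function.iterate_succ_apply'],
              hiso]
        _ ≤ Λ Y (g Y) * (Λ Y (g Y)) ^ k := by
            exact mul_le_mul_of_nonneg_left (ih hk Y) (hpos _ _).le
        _ = (Λ Y (g Y)) ^ (k + 1) := (pow_succ' _ _).symm

/-- Corollary `corollaryphin` (via existence of partial train tracks): if `X`
satisfies `Λ(X, φᵏX) = Λ(X, φX)ᵏ` for all `k ≥ 1` and minimizes the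
displacement of `φ`, then for every `n ≥ 1` it also satisfies
`Λ(X, φⁿX) = Λ(X, φX)ⁿ` and minimizes the displacement of `φⁿ`; consequently
`λ(φⁿ) = λ(φ)ⁿ` and this minimal displacement is realized at `X`. -/
theorem min_displacement_of_power
    (S : Type*) [Nonempty S] (Λ : S → S → ℝ)
    (hpos : ∀ x y : S, 0 < Λ x y)
    (htri : ∀ x y z : S, Λ x z ≤ Λ x y * Λ y z)
    (φ : S → S)
    (hiso : ∀ x y : S, Λ (φ x) (φ y) = Λ x y)
    (X : S)
    (htt : ∀ k : ℕ, 1 ≤ k → Λ X (φ^[k] X) = (Λ X (φ X)) ^ k)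
    (hmin : ∀ Y : S, Λ X (φ X) ≤ Λ Y (φ Y)) :
    ∀ n : ℕ, 1 ≤ n →
      Λ X (φ^[n] X) = (Λ X (φ X)) ^ n ∧
      (∀ Y : S, (Λ X (φ X)) ^ n ≤ Λ Y (φ^[n] Y)) ∧
      (⨅ Y : S, Λ Y (φ^[n] Y)) = (⨅ Y : S, Λ Y (φ Y)) ^ n ∧
      Λ X (φ^[n] X) = ⨅ Y : S, Λ Y (φ^[n] Y) := by
  intro n hn
  -- iterates are isometries
  have hisoIter : ∀ k : ℕ, ∀ x y : S, Λ (φ^[k] x) (φ^[k] y) = Λ x y := by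
    intro k
    induction k with
    | zero => simp
    | succ j ih =>
      intro x y
      rw [Function.iterate_succ_apply' φ j x, Function.iterate_succ_apply' φ j y,
        hiso, ih]
  -- lower bound
  have hlow : ∀ Y : S, (Λ X (φ X)) ^ n ≤ Λ Y (φ^[n] Y) := by
    intro Y
    apply le_of_pow_le_const_mul_pow (pow_pos (hpos _ _) n) (hpos _ _)
    intro m hm
    have hnm : 1 ≤ n * m := Nat.one_le_iff_ne_zero.2 (by positivity)
    have key : Λ X (φ^[n * m] X) = (Λ X (φ X)) ^ (n * m) := htt _ hnm
    have h1 : Λ X (φ^[n * m] X) ≤ Λ X Y * Λ Y (φ^[n * m] Y) * Λ (φ^[n * m] Y) (φ^[n * m] X) :=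
      le_trans (htri X Y (φ^[n * m] X))
        (by
          have := htri Y (φ^[n * m] Y) (φ^[n * m] X)
          nlinarith [hpos X Y, hpos Y (φ^[n * m] Y), hpos (φ^[n * m] Y) (φ^[n * m] X)])
    rw [hisoIter] at h1
    have hchain : Λ Y (φ^[n * m] Y) ≤ (Λ Y (φ^[n] Y)) ^ m := by
      have hg : ∀ x y : S, Λ ((φ^[n]) x) ((φ^[n]) y) = Λ x y := hisoIter n
      have := iter_chain Λ hpos htri (φ^[n]) hg m hm Y
      rwa [← Function.iterate_mul] at this
    calc ((Λ X (φ X)) ^ n) ^ m = (Λ X (φ X)) ^ (n * m) := by rw [← pow_mul]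
      _ = Λ X (φ^[n * m] X) := key.symm
      _ ≤ Λ X Y * Λ Y (φ^[n * m] Y) * Λ Y X := h1
      _ = Λ X Y * Λ Y X * Λ Y (φ^[n * m] Y) := by ring
      _ ≤ Λ X Y * Λ Y X * (Λ Y (φ^[n] Y)) ^ m := by
          have : (0:ℝ) ≤ Λ X Y * Λ Y X := (mul_pos (hpos X Y) (hpos Y X)).le
          exact mul_le_mul_of_nonneg_left hchain this
  have heq : Λ X (φ^[n] X) = (Λ X (φ X)) ^ n := htt n hn
  -- infima
  have hbdd : BddBelow (Set.range fun Y : S => Λ Y (φ^[n] Y)) := by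
    refine ⟨(Λ X (φ X)) ^ n, ?_⟩
    rintro _ ⟨Y, rfl⟩
    exact hlow Y
  have hinfn : (⨅ Y : S, Λ Y (φ^[n] Y)) = Λ X (φ^[n] X) := by
    apply le_antisymm (ciInf_le hbdd X)
    rw [heq]
    exact le_ciInf hlow
  have hbdd1 : BddBelow (Set.range fun Y : S => Λ Y (φ Y)) := by
    refine ⟨Λ X (φ X), ?_⟩
    rintro _ ⟨Y, rfl⟩
    exact hmin Y
  have hinf1 : (⨅ Y : S, Λ Y (φ Y)) = Λ X (φ X) :=
    le_antisymm (ciInf_le hbdd1 X) (le_ciInf hmin)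
  exact ⟨heq, hlow, by rw [hinfn, hinf1, heq], hinfn.symm⟩
end
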